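/- arXiv:2605.03313 — 3 statements merged into one kernel-verified Lean document; each statement's English description precedes it below -/
import Mathlib

section
/- Let f: ℝᵈ → ℝ be convex and L-smooth (L > 0). Let w, g ∈ ℝᵈ with ‖g - ∇f(w)‖ ≤ ε and ‖g‖ ≥ 4ε, and set w⁺ = w - g/(2L). Then f(w⁺) - f(w) ≤ (1/(2L))‖g‖(ε - 3‖g‖/4), and in particular f(w⁺) < f(w) when ‖g‖ > 0. -/
open InnerProductSpace

/-- Descent lemma: if `f` has an `L`-Lipschitz gradient, then
`f (w + v) ≤ f w + ⟪∇f w, v⟫ + (L/2)‖v‖²`. -/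
lemma descent_aux {d : ℕ} (f : EuclideanSpace ℝ (Fin d) → ℝ)
    (f' : EuclideanSpace ℝ (Fin d) → EuclideanSpace ℝ (Fin d))
    (hf' : ∀ x, HasGradientAt f (f' x) x)
    (L : ℝ) (hL : 0 < L)
    (hsmooth : ∀ x y, ‖f' x - f' y‖ ≤ L * ‖x - y‖)
    (w v : EuclideanSpace ℝ (Fin d)) :
    f (w + v) ≤ f w + inner ℝ (f' w) v + L / 2 * ‖v‖ ^ 2 := by
  set φ : ℝ → ℝ := fun t =>
    f (w + t • v) - t * inner ℝ (f' w) v - L * ‖v‖ ^ 2 / 2 * t ^ 2 with hφ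
  have hder : ∀ t : ℝ, HasDerivAt φ
      ((inner ℝ (f' (w + t • v)) v : ℝ) - inner ℝ (f' w) v - L * ‖v‖ ^ 2 * t) t := by
    intro t
    have hc : HasDerivAt (fun t : ℝ => w + t • v) v t := by
      simpa using ((hasDerivAt_id t).smul_const v).const_add w
    have h1 : HasDerivAt (fun t : ℝ => f (w + t • v))
        ((inner ℝ (f' (w + t • v)) v : ℝ)) t := by
      have := ((hf' (w + t • v)).hasFDerivAt).comp_hasDerivAt t hc
      simp at this; exact this
    have h2 : HasDerivAt (fun t : ℝ => t * (inner ℝ (f' w) v : ℝ))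
        ((inner ℝ (f' w) v : ℝ)) t := by
      simpa using (hasDerivAt_id t).mul_const (inner ℝ (f' w) v : ℝ)
    have h3 : HasDerivAt (fun t : ℝ => L * ‖v‖ ^ 2 / 2 * t ^ 2)
        (L * ‖v‖ ^ 2 * t) t := by
      have := (hasDerivAt_pow 2 t).const_mul (L * ‖v‖ ^ 2 / 2)
      simpa using this.congr_deriv (by ring)
    exact (h1.sub h2).sub h3
  have hanti : AntitoneOn φ (Set.Icc 0 1) := by
    apply antitoneOn_of_deriv_nonpos (convex_Icc 0 1)
    · exact fun t _ => (hder t).differentiableAt.continuousAt.continuousWithinAt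
    · intro t _
      exact (hder t).differentiableAt.differentiableWithinAt
    · intro t ht
      rw [interior_Icc] at ht
      rw [(hder t).deriv]
      have key : (inner ℝ (f' (w + t • v)) v : ℝ) - inner ℝ (f' w) v
          = inner ℝ (f' (w + t • v) - f' w) v := by rw [inner_sub_left]
      rw [key]
      have h1 : (inner ℝ (f' (w + t • v) - f' w) v : ℝ) ≤
          ‖f' (w + t • v) - f' w‖ * ‖v‖ :=
        real_inner_le_norm _ _
      have h2 : ‖f' (w + t • v) - f' w‖ ≤ L * ‖t • v‖ := by
        simpa using hsmooth (w + t • v) w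
      have h3 : ‖t • v‖ = t * ‖v‖ := by
        rw [norm_smul, Real.norm_eq_abs, abs_of_pos ht.1]
      rw [h3] at h2
      have h4 : ‖f' (w + t • v) - f' w‖ * ‖v‖ ≤ L * t * ‖v‖ * ‖v‖ := by
        have := mul_le_mul_of_nonneg_right h2 (norm_nonneg v)
        linarith [this]
      have : (L : ℝ) * ‖v‖ ^ 2 * t = L * t * ‖v‖ * ‖v‖ := by ring
      linarith
  have := hanti (Set.left_mem_Icc.2 zero_le_one) (Set.right_mem_Icc.2 zero_le_one)
    zero_le_one
  simp only [hφ, zero_smul, one_smul, add_zero, zero_mul, zero_pow, one_pow,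
    mul_zero, sub_zero, mul_one, one_mul] at this
  linarith

/-- One approximate gradient step decreases the function value:
`f(w⁺) - f(w) ≤ (1/(2L))‖g‖(ε - 3‖g‖/4)`, and `f(w⁺) < f(w)` when `‖g‖ > 0`. -/
theorem stmt_5 {d : ℕ} (f : EuclideanSpace ℝ (Fin d) → ℝ)
    (f' : EuclideanSpace ℝ (Fin d) → EuclideanSpace ℝ (Fin d))
    (hf' : ∀ x, HasGradientAt f (f' x) x)
    (hconv : ConvexOn ℝ Set.univ f)
    (L : ℝ) (hL : 0 < L)
    (hsmooth : ∀ x y, ‖f' x - f' y‖ ≤ L * ‖x - y‖)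
    (ε : ℝ) (hε : 0 ≤ ε)
    (w g : EuclideanSpace ℝ (Fin d))
    (hg : ‖g - f' w‖ ≤ ε) (hgnorm : 4 * ε ≤ ‖g‖) :
    f (w - (1 / (2 * L)) • g) - f w ≤ (1 / (2 * L)) * ‖g‖ * (ε - 3 * ‖g‖ / 4)
    ∧ (0 < ‖g‖ → f (w - (1 / (2 * L)) • g) < f w) := by
  have hdes := descent_aux f f' hf' L hL hsmooth w (-((1 / (2 * L)) • g))
  rw [← sub_eq_add_neg] at hdes
  have hinner : (inner ℝ (f' w) (-((1 / (2 * L)) • g)) : ℝ)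
      = -(1 / (2 * L)) * inner ℝ (f' w) g := by
    rw [inner_neg_right, real_inner_smul_right]; ring
  have hnorm : ‖-((1 / (2 * L)) • g)‖ ^ 2 = (1 / (2 * L)) ^ 2 * ‖g‖ ^ 2 := by
    rw [norm_neg, norm_smul, Real.norm_eq_abs, mul_pow, sq_abs]
  have hip : ‖g‖ ^ 2 - ε * ‖g‖ ≤ (inner ℝ (f' w) g : ℝ) := by
    have h1 : (inner ℝ (f' w) g : ℝ) = ‖g‖ ^ 2 - inner ℝ (g - f' w) g := by
      rw [inner_sub_left, real_inner_self_eq_norm_sq]; ring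
    have h2 : (inner ℝ (g - f' w) g : ℝ) ≤ ‖g - f' w‖ * ‖g‖ := real_inner_le_norm _ _
    nlinarith [norm_nonneg g]
  have hLinv : 0 < 1 / (2 * L) := by positivity
  have hbound : f (w - (1 / (2 * L)) • g) - f w
      ≤ (1 / (2 * L)) * ‖g‖ * (ε - 3 * ‖g‖ / 4) := by
    rw [hinner, hnorm] at hdes
    have hLL : (1 / (2 * L)) ^ 2 = (1 / (2 * L)) * (1 / L) / 2 := by
      field_simp
    have hL2 : L / 2 * ((1 / (2 * L)) ^ 2 * ‖g‖ ^ 2)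
        = (1 / (2 * L)) * ‖g‖ ^ 2 / 4 := by field_simp; ring
    nlinarith [mul_le_mul_of_nonneg_left hip hLinv.le]
  refine ⟨hbound, fun hgpos => ?_⟩
  have : (1 / (2 * L)) * ‖g‖ * (ε - 3 * ‖g‖ / 4) < 0 := by
    have h0 : ε - 3 * ‖g‖ / 4 < 0 := by linarith
    exact mul_neg_of_pos_of_neg (by positivity) h0
  linarith
end

section
/- Let f: ℝᵈ → ℝ be convex and L-smooth with minimizer w*. Let wₖ, gₖ ∈ ℝᵈ with ‖gₖ - ∇f(wₖ)‖ ≤ ε and ‖gₖ‖ ≥ 4ε, and set wₖ₊₁ = wₖ - gₖ/(2L). Then ‖wₖ₊₁ - w*‖² - ‖wₖ - w*‖² ≤ (f(w*) - f(wₖ₊₁) + ε‖wₖ - w*‖)/L. -/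
open InnerProductSpace


section aux
variable {d : ℕ} (f : EuclideanSpace ℝ (Fin d) → ℝ)
    (f' : EuclideanSpace ℝ (Fin d) → EuclideanSpace ℝ (Fin d))

-- derivative of the line restriction
lemma line_deriv (hf' : ∀ x, HasGradientAt f (f' x) x)
    (x v : EuclideanSpace ℝ (Fin d)) (t : ℝ) :
    HasDerivAt (fun t : ℝ => f (x + t • v)) (inner ℝ (f' (x + t • v)) v : ℝ) t := by
  have h2 : HasDerivAt (fun t : ℝ => x + t • v) v t := by
    simpa using ((hasDerivAt_id t).smul_const v).const_add x
  have h1 := (hf' (x + t • v)).hasFDerivAt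
  have := h1.comp_hasDerivAt t h2
  simp [InnerProductSpace.toDual_apply_apply] at this
  exact this

lemma conv_grad_ineq (hf' : ∀ x, HasGradientAt f (f' x) x)
    (hconv : ConvexOn ℝ Set.univ f) (x y : EuclideanSpace ℝ (Fin d)) :
    (inner ℝ (f' x) (y - x) : ℝ) ≤ f y - f x := by
  have hg : ConvexOn ℝ Set.univ (fun t : ℝ => f (x + t • (y - x))) := by
    have := hconv.comp_affineMap (AffineMap.lineMap x y)
    have heq : (f ∘ AffineMap.lineMap x y) = fun t : ℝ => f (x + t • (y - x)) := by
      funext t; simp [AffineMap.lineMap_apply, add_comm]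
    rw [heq] at this
    simpa using this
  have hd := line_deriv f f' hf' x (y - x) 0
  have := hg.le_slope_of_hasDerivAt (Set.mem_univ (0:ℝ)) (Set.mem_univ (1:ℝ))
    one_pos (by simpa using hd)
  simp [slope_def_field] at this
  simpa using this
end aux



lemma descent_lemma {d : ℕ} (f : EuclideanSpace ℝ (Fin d) → ℝ)
    (f' : EuclideanSpace ℝ (Fin d) → EuclideanSpace ℝ (Fin d))
    (hf' : ∀ x, HasGradientAt f (f' x) x)
    (L : ℝ) (hL : 0 < L)
    (hsmooth : ∀ x y, ‖f' x - f' y‖ ≤ L * ‖x - y‖)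
    (x y : EuclideanSpace ℝ (Fin d)) :
    f y ≤ f x + (inner ℝ (f' x) (y - x) : ℝ) + L / 2 * ‖y - x‖ ^ 2 := by
  set v := y - x with hv
  have hline : ∀ t : ℝ, HasDerivAt (fun t : ℝ => f (x + t • v))
      (inner ℝ (f' (x + t • v)) v : ℝ) t := by
    intro t
    have h2 : HasDerivAt (fun t : ℝ => x + t • v) v t := by
      simpa using ((hasDerivAt_id t).smul_const v).const_add x
    have h1 := (hf' (x + t • v)).hasFDerivAt
    have h3 := h1.comp_hasDerivAt t h2
    simp [InnerProductSpace.toDual_apply_apply] at h3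
    exact h3
  have hlip : LipschitzWith (Real.toNNReal L) f' := by
    apply LipschitzWith.of_dist_le_mul
    intro a b
    simpa [dist_eq_norm, Real.coe_toNNReal _ hL.le] using hsmooth a b
  have hcont : Continuous fun t : ℝ => (inner ℝ (f' (x + t • v)) v : ℝ) := by
    have h : Continuous fun t : ℝ => f' (x + t • v) :=
      hlip.continuous.comp (continuous_const.add (continuous_id.smul continuous_const))
    exact h.inner continuous_const
  have key : ∫ t in (0:ℝ)..1, (inner ℝ (f' (x + t • v)) v : ℝ)
      = f (x + (1:ℝ) • v) - f (x + (0:ℝ) • v) :=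
    intervalIntegral.integral_eq_sub_of_hasDerivAt (fun t _ => hline t)
      (hcont.intervalIntegrable 0 1)
  have hbound : ∀ t ∈ Set.Icc (0:ℝ) 1,
      (inner ℝ (f' (x + t • v)) v : ℝ) ≤ (inner ℝ (f' x) v : ℝ) + (L * ‖v‖ ^ 2) * t := by
    intro t ht
    have h1 : (inner ℝ (f' (x + t • v)) v : ℝ) - (inner ℝ (f' x) v : ℝ)
        = inner ℝ (f' (x + t • v) - f' x) v := by
      rw [inner_sub_left]
    have h2 : (inner ℝ (f' (x + t • v) - f' x) v : ℝ) ≤ ‖f' (x + t • v) - f' x‖ * ‖v‖ :=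
      real_inner_le_norm _ _
    have h3 : ‖f' (x + t • v) - f' x‖ ≤ L * (t * ‖v‖) := by
      have := hsmooth (x + t • v) x
      simpa [norm_smul, abs_of_nonneg ht.1] using this
    nlinarith [norm_nonneg v, mul_le_mul_of_nonneg_right h3 (norm_nonneg v)]
  have hmono : ∫ t in (0:ℝ)..1, (inner ℝ (f' (x + t • v)) v : ℝ)
      ≤ ∫ t in (0:ℝ)..1, ((inner ℝ (f' x) v : ℝ) + (L * ‖v‖ ^ 2) * t) := by
    apply intervalIntegral.integral_mono_on zero_le_one
      (hcont.intervalIntegrable 0 1)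
      ((continuous_const.add (continuous_const.mul continuous_id)).intervalIntegrable 0 1)
    exact hbound
  have hrhs : ∫ t in (0:ℝ)..1, ((inner ℝ (f' x) v : ℝ) + (L * ‖v‖ ^ 2) * t)
      = (inner ℝ (f' x) v : ℝ) + L / 2 * ‖v‖ ^ 2 := by
    have h1 : IntervalIntegrable (fun t : ℝ => L * ‖v‖ ^ 2 * t) MeasureTheory.volume 0 1 :=
      (continuous_const.mul continuous_id).intervalIntegrable 0 1
    rw [intervalIntegral.integral_add intervalIntegrable_const h1,
      intervalIntegral.integral_const_mul, integral_id]
    simp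
    ring
  have := key ▸ hmono
  simp only [one_smul, zero_smul, add_zero] at this
  have hxy : x + v = y := by rw [hv]; abel
  rw [hxy] at this
  linarith [hrhs ▸ this]

set_option maxHeartbeats 1000000 in
/-- Distance-to-optimum evolution of one approximate gradient step:
`‖wₖ₊₁ - w*‖² - ‖wₖ - w*‖² ≤ (f(w*) - f(wₖ₊₁) + ε‖wₖ - w*‖)/L`. -/
theorem stmt_6 {d : ℕ} (f : EuclideanSpace ℝ (Fin d) → ℝ)
    (f' : EuclideanSpace ℝ (Fin d) → EuclideanSpace ℝ (Fin d))
    (hf' : ∀ x, HasGradientAt f (f' x) x)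
    (hconv : ConvexOn ℝ Set.univ f)
    (L : ℝ) (hL : 0 < L)
    (hsmooth : ∀ x y, ‖f' x - f' y‖ ≤ L * ‖x - y‖)
    (wstar : EuclideanSpace ℝ (Fin d)) (hmin : ∀ x, f wstar ≤ f x)
    (ε : ℝ) (hε : 0 ≤ ε)
    (wk gk : EuclideanSpace ℝ (Fin d))
    (hg : ‖gk - f' wk‖ ≤ ε) (hgnorm : 4 * ε ≤ ‖gk‖) :
    ‖(wk - (1 / (2 * L)) • gk) - wstar‖ ^ 2 - ‖wk - wstar‖ ^ 2
      ≤ (f wstar - f (wk - (1 / (2 * L)) • gk) + ε * ‖wk - wstar‖) / L := by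
  set c : ℝ := 1 / (2 * L) with hc
  set w' : EuclideanSpace ℝ (Fin d) := wk - c • gk with hw'
  have hLne : L ≠ 0 := ne_of_gt hL
  set G : ℝ := ‖gk‖ with hG
  set D : ℝ := ‖wk - wstar‖ with hD
  set B : ℝ := (inner ℝ (wk - wstar) gk : ℝ) with hB
  set P : ℝ := (inner ℝ (f' wk) gk : ℝ) with hP
  -- convexity bound: B ≥ f wk - f wstar - ε * D
  have h3 : f wk - f wstar - ε * D ≤ B := by
    have h1 := conv_grad_ineq f f' hf' hconv wk wstar
    have hsplit : (inner ℝ gk (wstar - wk) : ℝ)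
        = (inner ℝ (f' wk) (wstar - wk) : ℝ) + (inner ℝ (gk - f' wk) (wstar - wk) : ℝ) := by
      rw [← inner_add_left]; congr 1; abel
    have hcs : (inner ℝ (gk - f' wk) (wstar - wk) : ℝ) ≤ ε * D := by
      calc (inner ℝ (gk - f' wk) (wstar - wk) : ℝ) ≤ ‖gk - f' wk‖ * ‖wstar - wk‖ :=
            real_inner_le_norm _ _
        _ ≤ ε * D := by
            rw [hD, norm_sub_rev wstar wk]
            exact mul_le_mul_of_nonneg_right hg (norm_nonneg _)
    have hBeq : (inner ℝ gk (wstar - wk) : ℝ) = -B := by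
      rw [hB, ← neg_sub wk wstar, inner_neg_right, real_inner_comm]
    nlinarith [hsplit, hcs, h1, hBeq]
  -- smoothness: P ≥ G^2 - ε*G
  have h4 : G ^ 2 - ε * G ≤ P := by
    have hsplit : (inner ℝ gk gk : ℝ) = P + (inner ℝ (gk - f' wk) gk : ℝ) := by
      rw [hP, ← inner_add_left]; congr 1; abel
    have hcs : (inner ℝ (gk - f' wk) gk : ℝ) ≤ ε * G :=
      le_trans (real_inner_le_norm _ _) (mul_le_mul_of_nonneg_right hg (norm_nonneg _))
    have hgg : (inner ℝ gk gk : ℝ) = G ^ 2 := real_inner_self_eq_norm_sq gk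
    linarith
  -- descent lemma at w'
  have h2 := descent_lemma f f' hf' L hL hsmooth wk w'
  have hwk : w' - wk = -(c • gk) := by rw [hw']; abel
  have h2i : (inner ℝ (f' wk) (w' - wk) : ℝ) = -(c * P) := by
    rw [hwk, inner_neg_right, real_inner_smul_right, hP, real_inner_comm]
  have h2n : ‖w' - wk‖ ^ 2 = c ^ 2 * G ^ 2 := by
    rw [hwk, norm_neg, norm_smul, mul_pow, hG, Real.norm_eq_abs, sq_abs]
  rw [h2i, h2n] at h2
  have h2L : 8 * L * f w' ≤ 8 * L * f wk - 4 * P + G ^ 2 := by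
    have e1 : 8 * L * (f wk + -(c * P) + L / 2 * (c ^ 2 * G ^ 2))
        = 8 * L * f wk - 4 * P + G ^ 2 := by
      rw [hc]; field_simp; ring
    nlinarith [mul_le_mul_of_nonneg_left h2 (by linarith : (0:ℝ) ≤ 8 * L)]
  -- norm expansion
  have h5 : ‖w' - wstar‖ ^ 2 = D ^ 2 - 2 * (c * B) + c ^ 2 * G ^ 2 := by
    have hrw : w' - wstar = (wk - wstar) - c • gk := by rw [hw']; abel
    rw [hrw, norm_sub_sq_real, real_inner_smul_right, norm_smul, mul_pow, Real.norm_eq_abs, sq_abs]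
  -- epsilon bound
  have hεG : ε * G ≤ G ^ 2 / 4 := by nlinarith [hgnorm, hε]
  have hG0 : 0 ≤ G := norm_nonneg _
  -- final combination
  rw [le_div_iff₀ hL, h5]
  have e2 : (D ^ 2 - 2 * (c * B) + c ^ 2 * G ^ 2 - D ^ 2) * L = -B + G ^ 2 / (4 * L) := by
    rw [hc]; field_simp; ring
  rw [e2]
  have h9 : 3 * G ^ 2 ≤ 4 * P := by nlinarith [h4, hεG]
  have h6 : G ^ 2 / (4 * L) ≤ f wk - f w' := by
    rw [div_le_iff₀ (by linarith : (0:ℝ) < 4 * L)]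
    nlinarith [h2L, h9]
  linarith [h3, h6]
end

section
/- Let f: ℝᵈ → ℝ be convex and L-smooth with minimizer w*. Consider the iteration w₀ = 0, wₖ₊₁ = wₖ - gₖ/(2L) with ‖gₖ - ∇f(wₖ)‖ ≤ ε and ‖gₖ‖ ≥ 4ε for all k < K. Define Eₖ = L‖wₖ - w*‖² + k(f(wₖ) - f(w*) - ε‖w*‖). If additionally f(wₖ) - f(w*) ≥ ε‖w*‖ and ‖wₖ - w*‖ ≤ ‖w*‖ hold for all relevant k, then Eₖ₊₁ ≤ Eₖ for all k ∈ [0, K-1]. -/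
open scoped RealInnerProductSpace
open Set

variable {F : Type*} [NormedAddCommGroup F] [InnerProductSpace ℝ F] [CompleteSpace F]

lemma aux_line_hasDerivAt (f : F → ℝ) (f' : F → F)
    (hf' : ∀ x, HasGradientAt f (f' x) x) (x v : F) (t : ℝ) :
    HasDerivAt (fun s : ℝ => f (x + s • v)) ⟪f' (x + t • v), v⟫ t := by
  have h1 : HasDerivAt (fun s : ℝ => x + s • v) v t := by
    simpa using ((hasDerivAt_id t).smul_const v).const_add x
  have h2 := (hasGradientAt_iff_hasFDerivAt.mp (hf' (x + t • v))).comp_hasDerivAt t h1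
  simpa [InnerProductSpace.toDual_apply_apply, Function.comp_def] using h2

/-- Convexity gradient inequality. -/
lemma aux_convex_inner (f : F → ℝ) (f' : F → F)
    (hf' : ∀ x, HasGradientAt f (f' x) x) (hconv : ConvexOn ℝ Set.univ f)
    (x y : F) : ⟪f' x, y - x⟫ ≤ f y - f x := by
  set v := y - x with hv
  have hφ : ConvexOn ℝ Set.univ (fun t : ℝ => f (x + t • v)) := by
    have := hconv.comp_affineMap (AffineMap.lineMap x y)
    simp only [preimage_univ] at this
    convert this using 2 with t
    case e'_12 => simp [AffineMap.lineMap_apply, hv, add_comm]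
    all_goals rfl
  have hd := aux_line_hasDerivAt f f' hf' x v 0
  simp only [zero_smul, add_zero] at hd
  have := ConvexOn.le_slope_of_hasDerivAt hφ (mem_univ (0:ℝ)) (mem_univ (1:ℝ))
    one_pos hd
  simpa [slope_def_field, hv] using this

/-- Descent lemma. -/
lemma aux_descent (f : F → ℝ) (f' : F → F)
    (hf' : ∀ x, HasGradientAt f (f' x) x)
    (L : ℝ) (hL : 0 < L) (hsmooth : ∀ x y, ‖f' x - f' y‖ ≤ L * ‖x - y‖)
    (x y : F) : f y ≤ f x + ⟪f' x, y - x⟫ + L / 2 * ‖y - x‖ ^ 2 := by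
  set v := y - x with hv
  set ψ : ℝ → ℝ := fun t => f (x + t • v) - t * ⟪f' x, v⟫ - L * t ^ 2 * ‖v‖ ^ 2 / 2 with hψ
  have hdψ : ∀ t : ℝ, HasDerivAt ψ
      (⟪f' (x + t • v), v⟫ - ⟪f' x, v⟫ - L * t * ‖v‖ ^ 2) t := by
    intro t
    have h1 := aux_line_hasDerivAt f f' hf' x v t
    have h2 : HasDerivAt (fun t : ℝ => t * ⟪f' x, v⟫) ⟪f' x, v⟫ t := by
      simpa using (hasDerivAt_id t).mul_const ⟪f' x, v⟫
    have h3 : HasDerivAt (fun t : ℝ => L * t ^ 2 * ‖v‖ ^ 2 / 2) (L * t * ‖v‖ ^ 2) t := by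
      have := ((hasDerivAt_pow 2 t).const_mul L).mul_const (‖v‖ ^ 2) |>.div_const 2
      convert this using 1
      case e'_9 => norm_num [Nat.cast_ofNat]; ring
      all_goals rfl
    exact (h1.sub h2).sub h3
  have hmono : ψ 1 ≤ ψ 0 := by
    have : AntitoneOn ψ (Icc (0:ℝ) 1) := by
      apply antitoneOn_of_deriv_nonpos (convex_Icc 0 1)
      · exact fun t _ => (hdψ t).continuousAt.continuousWithinAt
      · intro t _
        exact (hdψ t).differentiableAt.differentiableWithinAt
      · intro t ht
        rw [interior_Icc] at ht
        rw [(hdψ t).deriv]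
        have hCS : ⟪f' (x + t • v) - f' x, v⟫ ≤ ‖f' (x + t • v) - f' x‖ * ‖v‖ :=
          real_inner_le_norm _ _
        have hlip : ‖f' (x + t • v) - f' x‖ ≤ L * (t * ‖v‖) := by
          have := hsmooth (x + t • v) x
          simpa [norm_smul, abs_of_pos ht.1] using this
        have hinner : ⟪f' (x + t • v), v⟫ - ⟪f' x, v⟫ ≤ L * t * ‖v‖ ^ 2 := by
          have h := (real_inner_le_norm (f' (x + t • v) - f' x) v).trans
            (mul_le_mul_of_nonneg_right hlip (norm_nonneg v))
          rw [inner_sub_left] at h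
          nlinarith [h]
        linarith
    exact this (by simp) (by simp) zero_le_one
  have h0 : ψ 0 = f x := by simp [hψ]
  have h1 : ψ 1 = f y - ⟪f' x, v⟫ - L * ‖v‖ ^ 2 / 2 := by simp [hψ, hv]
  rw [h0, h1] at hmono
  linarith


/-- One step of the approximate gradient method: descent and distance control. -/
lemma aux_step (f : F → ℝ) (f' : F → F)
    (hf' : ∀ x, HasGradientAt f (f' x) x) (hconv : ConvexOn ℝ Set.univ f)
    (L ε : ℝ) (hL : 0 < L) (hε : 0 ≤ ε)
    (hsmooth : ∀ x y, ‖f' x - f' y‖ ≤ L * ‖x - y‖)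
    (wstar x x' gk : F)
    (hst : x' = x - (1 / (2 * L)) • gk)
    (hgx : ‖gk - f' x‖ ≤ ε) (hgn : 4 * ε ≤ ‖gk‖) :
    f x' ≤ f x ∧
      L * ‖x' - wstar‖ ^ 2 ≤
        L * ‖x - wstar‖ ^ 2 + f wstar - f x' + ε * ‖x - wstar‖ := by
  have h2L : (0:ℝ) < 2 * L := by linarith
  obtain ⟨u, hudef⟩ : ∃ u : F, u = x - x' := ⟨_, rfl⟩
  have hu : u = (1 / (2 * L)) • gk := by rw [hudef, hst, sub_sub_cancel]
  have hgu : gk = (2 * L) • u := by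
    rw [hu, smul_smul, show (2 * L) * (1 / (2 * L)) = 1 by field_simp, one_smul]
  have hng : ‖gk‖ = 2 * L * ‖u‖ := by
    rw [hgu, norm_smul, Real.norm_eq_abs, abs_of_pos h2L]
  -- descent lemma
  have hdes : f x' ≤ f x - ⟪f' x, u⟫ + L / 2 * ‖u‖ ^ 2 := by
    have h := aux_descent f f' hf' L hL hsmooth x x'
    have hxx : x' - x = -u := by rw [hudef]; abel
    rw [hxx, inner_neg_right, norm_neg] at h
    linarith
  -- approximate gradient: Cauchy–Schwarz on ⟪gk - f' x, gk⟫
  have hCS1 : 4 * L ^ 2 * ‖u‖ ^ 2 - 2 * L * ⟪f' x, u⟫ ≤ ε * (2 * L * ‖u‖) := by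
    have h := (real_inner_le_norm (gk - f' x) gk).trans
      (mul_le_mul_of_nonneg_right hgx (norm_nonneg gk))
    rw [hng] at h
    rw [inner_sub_left, hgu, real_inner_smul_left, real_inner_smul_right,
      real_inner_smul_right, real_inner_self_eq_norm_sq] at h
    nlinarith [h]
  have hnorm4 : 4 * ε ≤ 2 * L * ‖u‖ := by rw [← hng]; exact hgn
  have hεu : ε * ‖u‖ ≤ L / 2 * ‖u‖ ^ 2 := by
    have h := mul_le_mul_of_nonneg_right hnorm4 (norm_nonneg u)
    nlinarith [h]
  -- sufficient decrease : L‖u‖² ≤ f x - f x'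
  have hD1 : L * ‖u‖ ^ 2 ≤ f x - f x' := by
    have h1 := mul_le_mul_of_nonneg_left hdes (le_of_lt h2L)
    have h2 := mul_le_mul_of_nonneg_left hεu (le_of_lt h2L)
    have h3 : 2 * L * (L * ‖u‖ ^ 2) ≤ 2 * L * (f x - f x') := by
      nlinarith [h1, h2, hCS1]
    exact (mul_le_mul_iff_right₀ h2L).mp h3
  have hfdec : f x' ≤ f x := by nlinarith [hD1, mul_nonneg hL.le (sq_nonneg ‖u‖)]
  refine ⟨hfdec, ?_⟩
  -- convexity inequality
  have hconv1 : -⟪f' x, x - wstar⟫ ≤ f wstar - f x := by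
    have h := aux_convex_inner f f' hf' hconv x wstar
    rwa [show wstar - x = -(x - wstar) by abel, inner_neg_right] at h
  -- lower bound on ⟪gk, x - w*⟫
  have hJ : f x - f wstar - ε * ‖x - wstar‖ ≤ 2 * L * ⟪u, x - wstar⟫ := by
    have h1 : ‖f' x - gk‖ ≤ ε := by rw [norm_sub_rev]; exact hgx
    have h : ⟪f' x - gk, x - wstar⟫ ≤ ε * ‖x - wstar‖ :=
      (real_inner_le_norm _ _).trans
        (mul_le_mul_of_nonneg_right h1 (norm_nonneg (x - wstar)))
    rw [inner_sub_left, hgu, real_inner_smul_left] at h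
    linarith
  -- distance expansion
  have hexp : ‖x' - wstar‖ ^ 2 =
      ‖x - wstar‖ ^ 2 - 2 * ⟪u, x - wstar⟫ + ‖u‖ ^ 2 := by
    have hxw : x' - wstar = (x - wstar) - u := by rw [hudef]; abel
    rw [hxw, norm_sub_sq_real, real_inner_comm]
  rw [hexp]
  nlinarith [hJ, hD1]

/-- The potential `Eₖ = L‖wₖ - w*‖² + k(f(wₖ) - f(w*) - ε‖w*‖)` is
nonincreasing along the approximate-gradient iteration. -/
theorem stmt_10 {d : ℕ} (f : EuclideanSpace ℝ (Fin d) → ℝ)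
    (f' : EuclideanSpace ℝ (Fin d) → EuclideanSpace ℝ (Fin d))
    (hf' : ∀ x, HasGradientAt f (f' x) x)
    (hconv : ConvexOn ℝ Set.univ f)
    (L : ℝ) (hL : 0 < L)
    (hsmooth : ∀ x y, ‖f' x - f' y‖ ≤ L * ‖x - y‖)
    (wstar : EuclideanSpace ℝ (Fin d)) (hmin : ∀ x, f wstar ≤ f x)
    (ε : ℝ) (hε : 0 ≤ ε) (K : ℕ)
    (w g : ℕ → EuclideanSpace ℝ (Fin d))
    (hw0 : w 0 = 0)
    (hstep : ∀ k < K, w (k + 1) = w k - (1 / (2 * L)) • g k)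
    (hg : ∀ k < K, ‖g k - f' (w k)‖ ≤ ε)
    (hgnorm : ∀ k < K, 4 * ε ≤ ‖g k‖)
    (hgap : ∀ k ≤ K, ε * ‖wstar‖ ≤ f (w k) - f wstar)
    (hdist : ∀ k ≤ K, ‖w k - wstar‖ ≤ ‖wstar‖) :
    ∀ k < K,
      L * ‖w (k + 1) - wstar‖ ^ 2
          + (k + 1 : ℝ) * (f (w (k + 1)) - f wstar - ε * ‖wstar‖)
        ≤ L * ‖w k - wstar‖ ^ 2 + (k : ℝ) * (f (w k) - f wstar - ε * ‖wstar‖) := by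
  intro k hk
  obtain ⟨hfdec, hD2⟩ := aux_step f f' hf' hconv L ε hL hε hsmooth wstar
    (w k) (w (k + 1)) (g k) (hstep k hk) (hg k hk) (hgnorm k hk)
  have hεd : ε * ‖w k - wstar‖ ≤ ε * ‖wstar‖ :=
    mul_le_mul_of_nonneg_left (hdist k hk.le) hε
  have hk0 : (0:ℝ) ≤ (k:ℝ) := Nat.cast_nonneg k
  have hprod : (k:ℝ) * (f (w (k + 1)) - f (w k)) ≤ 0 :=
    mul_nonpos_iff.mpr (Or.inl ⟨hk0, sub_nonpos.mpr hfdec⟩)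
  nlinarith [hD2, hprod, hεd]
end
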